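/- Let γ₁, γ₂ > 0 with γ₁ ≠ γ₂, and define k(y) = sqrt(γ₁² + γ₂² + 2γ₁γ₂ cos(y)), γ₋ = |γ₂ - γ₁|. Then for all y ∈ [0, π], k(y) - γ₋ ≥ (2 min{γ₁, γ₂}/π²)·(π - y)². -/

import Mathlib

open Real

theorem k_minus_gamma_minus_lower_bound
    (γ₁ γ₂ : ℝ) (h₁ : 0 < γ₁) (h₂ : 0 < γ₂) (hne : γ₁ ≠ γ₂)
    (k : ℝ → ℝ)
    (hk : ∀ y, k y = Real.sqrt (γ₁ ^ 2 + γ₂ ^ 2 + 2 * γ₁ * γ₂ * Real.cos y))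
    (y : ℝ) (hy : y ∈ Set.Icc 0 π) :
    k y - |γ₂ - γ₁| ≥ (2 * min γ₁ γ₂ / π ^ 2) * (π - y) ^ 2 := by
  obtain ⟨hy0, hyπ⟩ := hy
  have hπ : (0:ℝ) < π := Real.pi_pos
  set m := min γ₁ γ₂ with hm
  set M := max γ₁ γ₂ with hM
  have hmM : m * M = γ₁ * γ₂ := min_mul_max γ₁ γ₂
  have habs : |γ₂ - γ₁| = M - m := by
    rw [abs_sub_comm, ← max_sub_min_eq_abs, max_comm, min_comm]
  have hm0 : 0 < m := lt_min h₁ h₂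
  have hM0 : 0 < M := lt_of_lt_of_le hm0 (min_le_max)
  -- s = (π - y)/π
  set s := (π - y) / π with hs
  have hs0 : 0 ≤ s := div_nonneg (by linarith) hπ.le
  have hs1 : s ≤ 1 := by
    rw [div_le_one hπ]; linarith
  -- cos(y/2) ≥ s
  have hcos : s ≤ Real.cos (y / 2) := by
    have h := Real.mul_le_sin (x := π / 2 - y / 2) (by linarith) (by linarith)
    rw [Real.sin_pi_div_two_sub] at h
    calc s = 2 / π * (π / 2 - y / 2) := by field_simp [hs]; rw [hs, div_mul_cancel₀ _ hπ.ne']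
      _ ≤ Real.cos (y / 2) := h
  have hcos0 : 0 ≤ Real.cos (y / 2) := le_trans hs0 hcos
  -- A = γ₋² + 4γ₁γ₂ cos²(y/2)
  have hcosy : Real.cos y = 2 * Real.cos (y / 2) ^ 2 - 1 := by
    have := Real.cos_sq (y / 2)
    rw [show 2 * (y / 2) = y by ring] at this
    linarith
  have hA : γ₁ ^ 2 + γ₂ ^ 2 + 2 * γ₁ * γ₂ * Real.cos y
      = (M - m) ^ 2 + 4 * (m * M) * Real.cos (y / 2) ^ 2 := by
    rw [hcosy, hmM]
    rcases le_total γ₁ γ₂ with h | h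
    · rw [hm, hM, min_eq_left h, max_eq_right h]; ring
    · rw [hm, hM, min_eq_right h, max_eq_left h]; ring
  -- target c
  set c := (M - m) + 2 * m * s ^ 2 with hc
  have hc0 : 0 ≤ c := by
    have : 0 ≤ M - m := sub_nonneg.2 min_le_max
    positivity
  have hgoal : (2 * m / π ^ 2) * (π - y) ^ 2 = 2 * m * s ^ 2 := by
    rw [hs]; field_simp
  have hcsq : c ^ 2 ≤ γ₁ ^ 2 + γ₂ ^ 2 + 2 * γ₁ * γ₂ * Real.cos y := by
    rw [hA]
    have h1 : s ^ 2 ≤ Real.cos (y / 2) ^ 2 := by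
      exact pow_le_pow_left₀ hs0 hcos 2
    have h2 : s ^ 2 ≤ 1 := by nlinarith
    have hMm : m ≤ M := min_le_max
    nlinarith [mul_le_mul_of_nonneg_left h1 (mul_nonneg hm0.le hM0.le),
      mul_nonneg (mul_nonneg (mul_nonneg hm0.le hm0.le) (sq_nonneg s)) (sub_nonneg.2 h2)]
  have hsqrt : c ≤ k y := by
    rw [hk]
    calc c = Real.sqrt (c ^ 2) := (Real.sqrt_sq hc0).symm
      _ ≤ _ := Real.sqrt_le_sqrt hcsq
  rw [habs, hgoal]
  linarith [hsqrt]
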